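/- Let x, y : [0,∞) → [0,∞) be measurable with x differentiable, satisfying x'(t) + y(t) ≤ C(x(t)² + 1) and x(t) ≤ C y(t) for all t ≥ 0, for some constant C > 0. If ∫₀^∞ x(s) ds < ∞, then x is bounded on [0,∞) and x(t) → 0 as t → ∞. -/

import Mathlib

open MeasureTheory Filter Topology

/-- Lemma A.1 (first part): if `x' + y ≤ C(x² + 1)`, `x ≤ C y`, and `∫₀^∞ x < ∞`,
then `x` is bounded and tends to `0` at infinity. -/
theorem stmt1 (x x' y : ℝ → ℝ) (C : ℝ) (hC : 0 < C)
    (hxnonneg : ∀ t, 0 ≤ t → 0 ≤ x t)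
    (hynonneg : ∀ t, 0 ≤ t → 0 ≤ y t)
    (hymeas : Measurable y)
    (hderiv : ∀ t, 0 ≤ t → HasDerivAt x (x' t) t)
    (hineq : ∀ t, 0 ≤ t → x' t + y t ≤ C * (x t ^ 2 + 1))
    (hcomp : ∀ t, 0 ≤ t → x t ≤ C * y t)
    (hint : IntegrableOn x (Set.Ici 0)) :
    (∃ M : ℝ, ∀ t, 0 ≤ t → x t ≤ M) ∧ Tendsto x atTop (𝓝 0) := by
  -- derivative bound
  have hx' : ∀ t, 0 ≤ t → x' t ≤ C * (x t ^ 2 + 1) := fun t ht =>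
    le_trans (le_add_of_nonneg_right (hynonneg t ht)) (hineq t ht)
  -- the function g u = arctan (x u) - C * u is antitone on [0, ∞)
  have hg : ∀ u ∈ Set.Ici (0:ℝ), HasDerivAt (fun u => Real.arctan (x u) - C * u)
      (1 / (1 + x u ^ 2) * x' u - C) u := by
    intro u hu
    exact ((hderiv u hu).arctan).sub (by simpa using (hasDerivAt_id u).const_mul C)
  have hganti : AntitoneOn (fun u => Real.arctan (x u) - C * u) (Set.Ici 0) := by
    apply antitoneOn_of_deriv_nonpos (convex_Ici 0)
    · exact fun u hu => (hg u hu).continuousAt.continuousWithinAt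
    · intro u hu
      rw [interior_Ici] at hu
      exact (hg u (Set.mem_Ici.mpr (le_of_lt (Set.mem_Ioi.mp hu)))).differentiableAt.differentiableWithinAt
    · intro u hu
      rw [interior_Ici] at hu
      rw [(hg u (Set.mem_Ici.mpr (le_of_lt (Set.mem_Ioi.mp hu)))).deriv]
      have h1 : (0:ℝ) < 1 + x u ^ 2 := by positivity
      have := hx' u (le_of_lt hu)
      rw [sub_nonpos, div_mul_eq_mul_div, one_mul, div_le_iff₀ h1]
      linarith
  have key : ∀ s t : ℝ, 0 ≤ s → s ≤ t →
      Real.arctan (x t) - C * t ≤ Real.arctan (x s) - C * s :=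
    fun s t hs hst => hganti hs (le_trans hs hst) hst
  -- main claim: for every ε > 0, eventually x t < ε
  have claim : ∀ ε : ℝ, 0 < ε → ∃ N : ℝ, 0 ≤ N ∧ ∀ t, N ≤ t → x t < ε := by
    intro ε hε
    by_contra hcon
    push_neg at hcon
    have harcpos : 0 < Real.arctan ε := by
      have := Real.arctan_strictMono hε
      rwa [Real.arctan_zero] at this
    set θ : ℝ := Real.arctan ε / 2 with hθdef
    have hθpos : 0 < θ := by positivity
    have hθlt : θ < Real.pi / 2 := by
      have := Real.arctan_lt_pi_div_two ε
      linarith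
    set δ : ℝ := Real.tan θ with hδdef
    have hδpos : 0 < δ := Real.tan_pos_of_pos_of_lt_pi_div_two hθpos hθlt
    set h : ℝ := Real.arctan ε / (2 * C) with hhdef
    have hhpos : 0 < h := by positivity
    have hCh : C * h = θ := by
      rw [hhdef, hθdef, mul_div_assoc', mul_comm 2 C, ← div_div, mul_div_cancel_left₀ _ hC.ne']
    -- tail integrals tend to 0
    have htail : Tendsto (fun n : ℕ => ∫ s in Set.Ici (n:ℝ), x s) atTop (𝓝 0) := by
      have hanti : Antitone (fun n : ℕ => Set.Ici (n:ℝ)) := fun m n hmn =>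
        Set.Ici_subset_Ici.2 (by exact_mod_cast hmn)
      have := Antitone.tendsto_setIntegral (μ := volume)
        (fun n : ℕ => measurableSet_Ici) hanti (f := x) (by simpa using hint)
      have hempty : ⋂ n : ℕ, Set.Ici ((n:ℝ)) = ∅ := by
        ext t
        simp only [Set.mem_iInter, Set.mem_Ici, Set.mem_empty_iff_false, iff_false, not_forall,
          not_le]
        obtain ⟨n, hn⟩ := exists_nat_gt t
        exact ⟨n, hn⟩
      simpa [hempty] using this
    -- pick n with small tail
    have := (Metric.tendsto_atTop.mp htail (δ * h) (by positivity))
    obtain ⟨n₀, hn₀⟩ := this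
    set n : ℕ := n₀
    have hsmall : ∫ s in Set.Ici (n:ℝ), x s < δ * h := by
      have := hn₀ n le_rfl
      rw [Real.dist_eq, sub_zero] at this
      calc ∫ s in Set.Ici (n:ℝ), x s ≤ |∫ s in Set.Ici (n:ℝ), x s| := le_abs_self _
        _ < δ * h := this
    -- pick t ≥ n + h with x t ≥ ε
    obtain ⟨t, ht, hxt⟩ := hcon ((n:ℝ) + h) (by positivity)
    have ht0 : (0:ℝ) ≤ t - h := by
      have : (0:ℝ) ≤ (n:ℝ) := Nat.cast_nonneg n
      linarith
    -- on [t - h, t], x ≥ δ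
    have hlow : ∀ s ∈ Set.Icc (t - h) t, δ ≤ x s := by
      intro s hs
      have hs0 : 0 ≤ s := le_trans ht0 hs.1
      have hk := key s t hs0 hs.2
      have harc : θ ≤ Real.arctan (x s) := by
        have hεt : Real.arctan ε ≤ Real.arctan (x t) := Real.arctan_strictMono.monotone hxt
        have hts : C * (t - s) ≤ C * h := by
          apply mul_le_mul_of_nonneg_left _ (le_of_lt hC)
          linarith [hs.1]
        nlinarith [hCh]
      have := Real.strictMonoOn_tan.monotoneOn
        (Set.mem_Ioo.mpr ⟨by linarith [Real.pi_pos], hθlt⟩)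
        (Real.arctan_mem_Ioo (x s)) harc
      rwa [Real.tan_arctan] at this
    -- integral lower bound
    have hintIcc : IntegrableOn x (Set.Icc (t - h) t) := by
      apply hint.mono_set
      intro s hs
      exact le_trans ht0 hs.1
    have hlb : δ * h ≤ ∫ s in Set.Icc (t - h) t, x s := by
      have hconst : ∫ _ in Set.Icc (t - h) t, δ = δ * h := by
        rw [setIntegral_const]
        rw [Real.volume_real_Icc_of_le (by linarith : t - h ≤ t)]
        rw [smul_eq_mul]
        ring
      calc δ * h = ∫ _ in Set.Icc (t - h) t, δ := hconst.symm
        _ ≤ ∫ s in Set.Icc (t - h) t, x s := by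
            apply setIntegral_mono_on (integrableOn_const (by
              rw [Real.volume_Icc]; exact ENNReal.ofReal_ne_top)) hintIcc
              measurableSet_Icc
            intro s hs
            exact hlow s hs
    -- but it is ≤ the tail
    have hub : ∫ s in Set.Icc (t - h) t, x s ≤ ∫ s in Set.Ici (n:ℝ), x s := by
      apply setIntegral_mono_set (hint.mono_set (Set.Ici_subset_Ici.2 (Nat.cast_nonneg n)))
      · rw [EventuallyLE, ae_restrict_iff' measurableSet_Ici]
        filter_upwards with s hs
        exact hxnonneg s (le_trans (Nat.cast_nonneg n) hs)
      · exact HasSubset.Subset.eventuallyLE fun s hs => le_trans (by linarith : (n:ℝ) ≤ t - h) hs.1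
    linarith
  constructor
  · -- boundedness
    obtain ⟨N, hN0, hN⟩ := claim 1 one_pos
    have hcont : ContinuousOn x (Set.Icc 0 N) := fun u hu =>
      ((hderiv u hu.1).continuousAt).continuousWithinAt
    obtain ⟨a, _, ha⟩ := (isCompact_Icc (a := (0:ℝ)) (b := N)).exists_isMaxOn
      ⟨0, le_refl 0, hN0⟩ hcont
    refine ⟨max (x a) 1, fun t ht => ?_⟩
    rcases le_or_gt t N with hle | hlt
    · exact le_trans (ha ⟨ht, hle⟩) (le_max_left _ _)
    · exact le_trans (le_of_lt (hN t (le_of_lt hlt))) (le_max_right _ _)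
  · -- limit
    rw [Metric.tendsto_atTop]
    intro ε hε
    obtain ⟨N, hN0, hN⟩ := claim ε hε
    refine ⟨N, fun t ht => ?_⟩
    rw [Real.dist_eq, sub_zero, abs_of_nonneg (hxnonneg t (le_trans hN0 ht))]
    exact hN t ht
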